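/- Any continuous solution x of the loaded Volterra integral equation can be reconstructed from its load vector: for all t ∈ [t₀,T], x(t) = F(t,λ) − Σ_{j=1}^{m−1} b_j(t,λ) x(t_j). -/

import Mathlib

open MeasureTheory intervalIntegral

noncomputable def KIter (K : ℝ → ℝ → ℝ) : ℕ → ℝ → ℝ → ℝ
  | 0 => K
  | n + 1 => fun t s => ∫ z in s..t, K t z * KIter K n z s

lemma KIter_cont {K : ℝ → ℝ → ℝ} (hK : Continuous fun q : ℝ × ℝ => K q.1 q.2) :
    ∀ n, Continuous fun q : ℝ × ℝ => KIter K n q.1 q.2 := by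
  intro n
  induction n with
  | zero => exact hK
  | succ n ih =>
    have hF : Continuous (Function.uncurry fun (q : ℝ × ℝ) (z : ℝ) => K q.1 z * KIter K n z q.2) := by
      apply Continuous.mul
      · exact hK.comp ((continuous_fst.comp continuous_fst).prodMk continuous_snd)
      · exact ih.comp (continuous_snd.prodMk (continuous_snd.comp continuous_fst))
    have h1 : Continuous fun q : ℝ × ℝ => ∫ z in (0:ℝ)..q.1, K q.1 z * KIter K n z q.2 :=
      continuous_parametric_intervalIntegral_of_continuous hF continuous_fst
    have h2 : Continuous fun q : ℝ × ℝ => ∫ z in (0:ℝ)..q.2, K q.1 z * KIter K n z q.2 :=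
      continuous_parametric_intervalIntegral_of_continuous hF continuous_snd
    have key : ∀ q : ℝ × ℝ, KIter K (n+1) q.1 q.2
        = (∫ z in (0:ℝ)..q.1, K q.1 z * KIter K n z q.2)
          - ∫ z in (0:ℝ)..q.2, K q.1 z * KIter K n z q.2 := by
      intro q
      have hInt : ∀ u v : ℝ, IntervalIntegrable (fun z => K q.1 z * KIter K n z q.2) volume u v := by
        intro u v
        apply Continuous.intervalIntegrable
        exact (hK.comp (continuous_const.prodMk continuous_id)).mul
          (ih.comp (continuous_id.prodMk continuous_const))
      show (∫ z in q.2..q.1, K q.1 z * KIter K n z q.2) = _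
      rw [integral_interval_sub_left (hInt 0 q.1) (hInt 0 q.2)]
    convert h1.sub h2 using 1; funext q; exact key q

lemma KIter_bound {K : ℝ → ℝ → ℝ} (hK : Continuous fun q : ℝ × ℝ => K q.1 q.2)
    {M : ℝ} (hM : ∀ t s, |K t s| ≤ M) :
    ∀ n, ∀ s t : ℝ, s ≤ t → |KIter K n t s| ≤ M ^ (n+1) * (t - s) ^ n / n.factorial := by
  have hM0 : 0 ≤ M := le_trans (abs_nonneg _) (hM 0 0)
  intro n
  induction n with
  | zero => intro s t _; simpa [KIter] using hM t s
  | succ n ih =>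
    intro s t hst
    have hgint : IntervalIntegrable (fun z => M * (M ^ (n+1) * (z - s) ^ n / n.factorial)) volume s t := by
      apply Continuous.intervalIntegrable; fun_prop
    have hb : ‖∫ z in s..t, K t z * KIter K n z s‖
        ≤ |∫ z in s..t, M * (M ^ (n+1) * (z - s) ^ n / n.factorial)| := by
      apply intervalIntegral.norm_integral_le_abs_of_norm_le _ hgint
      filter_upwards [ae_restrict_mem measurableSet_uIoc] with z hz
      rw [Set.uIoc_of_le hst] at hz
      have h1 : |K t z| ≤ M := hM t z
      have h2 : |KIter K n z s| ≤ M ^ (n+1) * (z - s) ^ n / n.factorial := ih s z hz.1.le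
      calc ‖K t z * KIter K n z s‖ = |K t z| * |KIter K n z s| := abs_mul _ _
        _ ≤ M * (M ^ (n+1) * (z - s) ^ n / n.factorial) := by
            apply mul_le_mul h1 h2 (abs_nonneg _) hM0
    have hval : (∫ z in s..t, M * (M ^ (n+1) * (z - s) ^ n / n.factorial))
        = M ^ (n+2) * (t - s) ^ (n+1) / (n+1).factorial := by
      have h1 : (∫ z in s..t, ((z - s) ^ n : ℝ)) = (t - s) ^ (n+1) / (n+1) := by
        rw [intervalIntegral.integral_comp_sub_right (fun u => u ^ n) s]
        simp [integral_pow]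
      rw [intervalIntegral.integral_const_mul, intervalIntegral.integral_div,
        intervalIntegral.integral_const_mul, h1, Nat.factorial_succ]
      push_cast
      have : (n.factorial : ℝ) ≠ 0 := Nat.cast_ne_zero.mpr n.factorial_ne_zero
      field_simp
      ring
    have hnn : (0:ℝ) ≤ M ^ (n+2) * (t - s) ^ (n+1) / (n+1).factorial := by
      have h0 : (0:ℝ) ≤ t - s := sub_nonneg.mpr hst
      positivity
    have : |KIter K (n+1) t s| = ‖∫ z in s..t, K t z * KIter K n z s‖ := by
      rw [Real.norm_eq_abs]; rfl
    rw [this]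
    refine hb.trans ?_
    rw [hval, abs_of_nonneg hnn]

lemma fubini_tri {G : ℝ → ℝ → ℝ} (hG : Continuous fun q : ℝ × ℝ => G q.1 q.2)
    {t₀ t : ℝ} (h : t₀ ≤ t) :
    (∫ s in t₀..t, ∫ z in t₀..s, G s z) = ∫ z in t₀..t, ∫ s in z..t, G s z := by
  obtain ⟨C, hC⟩ := (isCompact_Icc.prod isCompact_Icc :
      IsCompact (Set.Icc t₀ t ×ˢ Set.Icc t₀ t)).exists_bound_of_continuousOn hG.continuousOn
  set Hu : ℝ × ℝ → ℝ := fun q => if q.2 ≤ q.1 then G q.1 q.2 else 0 with hHu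
  have hHmeas : Measurable Hu :=
    Measurable.ite (measurableSet_le measurable_snd measurable_fst) hG.measurable measurable_const
  have hGleft : ∀ s : ℝ, Continuous fun z => G s z :=
    fun s => hG.comp (continuous_const.prodMk continuous_id)
  have hGright : ∀ z : ℝ, Continuous fun s => G s z :=
    fun z => hG.comp (continuous_id.prodMk continuous_const)
  have hint : Integrable (fun q : ℝ × ℝ => Hu q)
      ((volume.restrict (Set.Ioc t₀ t)).prod (volume.restrict (Set.Ioc t₀ t))) := by
    rw [Measure.prod_restrict]
    apply Measure.integrableOn_of_bounded (M := max C 0)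
    · rw [Measure.prod_prod]
      exact (ENNReal.mul_lt_top measure_Ioc_lt_top measure_Ioc_lt_top).ne
    · exact hHmeas.aestronglyMeasurable
    · filter_upwards [ae_restrict_mem (measurableSet_Ioc.prod measurableSet_Ioc)] with q hq
      by_cases h' : q.2 ≤ q.1
      · simp only [hHu, if_pos h', Real.norm_eq_abs]
        refine le_trans ?_ (le_max_left _ _)
        exact hC q ⟨Set.Ioc_subset_Icc_self hq.1, Set.Ioc_subset_Icc_self hq.2⟩
      · simp [hHu, if_neg h']
  have swap := MeasureTheory.integral_integral_swap (f := fun s z => Hu (s, z))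
    (μ := volume.restrict (Set.Ioc t₀ t)) (ν := volume.restrict (Set.Ioc t₀ t)) hint
  have hL : (∫ s in t₀..t, ∫ z in t₀..s, G s z)
      = ∫ s in Set.Ioc t₀ t, ∫ z in Set.Ioc t₀ t, Hu (s, z) := by
    rw [intervalIntegral.integral_of_le h]
    apply setIntegral_congr_fun measurableSet_Ioc
    intro s hs
    have hs1 : t₀ ≤ s := hs.1.le
    have hs2 : s ≤ t := hs.2
    have hsplit : Set.Ioc t₀ t = Set.Ioc t₀ s ∪ Set.Ioc s t :=
      (Set.Ioc_union_Ioc_eq_Ioc hs1 hs2).symm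
    have intA : IntegrableOn (fun z => Hu (s, z)) (Set.Ioc t₀ s) volume := by
      apply IntegrableOn.congr_fun ((hGleft s).integrableOn_Ioc) _ measurableSet_Ioc
      intro z hz
      simp [hHu, if_pos hz.2]
    have intB : IntegrableOn (fun z => Hu (s, z)) (Set.Ioc s t) volume := by
      apply IntegrableOn.congr_fun (integrableOn_zero) _ measurableSet_Ioc
      intro z hz
      simp [hHu, if_neg (not_le.mpr hz.1)]
    show (∫ z in t₀..s, G s z) = ∫ z in Set.Ioc t₀ t, Hu (s, z)
    rw [show (∫ z in t₀..s, G s z) = ∫ z in Set.Ioc t₀ s, G s z from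
        intervalIntegral.integral_of_le hs1, hsplit,
      setIntegral_union (Set.Ioc_disjoint_Ioc_of_le le_rfl) measurableSet_Ioc intA intB]
    have e1 : ∫ z in Set.Ioc t₀ s, Hu (s, z) = ∫ z in Set.Ioc t₀ s, G s z := by
      apply setIntegral_congr_fun measurableSet_Ioc
      intro z hz; simp [hHu, if_pos hz.2]
    have e2 : ∫ z in Set.Ioc s t, Hu (s, z) = 0 := by
      rw [show (0:ℝ) = ∫ z in Set.Ioc s t, (0:ℝ) by simp]
      apply setIntegral_congr_fun measurableSet_Ioc
      intro z hz; simp [hHu, if_neg (not_le.mpr hz.1)]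
    rw [e1, e2, add_zero]
  have hR : (∫ z in t₀..t, ∫ s in z..t, G s z)
      = ∫ z in Set.Ioc t₀ t, ∫ s in Set.Ioc t₀ t, Hu (s, z) := by
    rw [intervalIntegral.integral_of_le h]
    apply setIntegral_congr_fun measurableSet_Ioc
    intro z hz
    have hz1 : t₀ ≤ z := hz.1.le
    have hz2 : z ≤ t := hz.2
    have hsplit : Set.Ioc t₀ t = Set.Ioc t₀ z ∪ Set.Ioc z t :=
      (Set.Ioc_union_Ioc_eq_Ioc hz1 hz2).symm
    have hae : (fun s => Hu (s, z)) =ᵐ[volume.restrict (Set.Ioc t₀ z)] 0 := by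
      have hnz : ∀ᵐ s : ℝ ∂volume.restrict (Set.Ioc t₀ z), s ≠ z :=
        ae_restrict_of_ae (by
          have : (volume : Measure ℝ) {z} = 0 := measure_singleton z
          filter_upwards [compl_mem_ae_iff.mpr this] with s hs
          simpa using hs)
      filter_upwards [ae_restrict_mem measurableSet_Ioc, hnz] with s hs hsne
      have : ¬ z ≤ s := not_le.mpr (lt_of_le_of_ne hs.2 hsne)
      simp [hHu, if_neg this]
    have intA : IntegrableOn (fun s => Hu (s, z)) (Set.Ioc t₀ z) volume :=
      (integrable_zero _ _ _).congr hae.symm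
    have intB : IntegrableOn (fun s => Hu (s, z)) (Set.Ioc z t) volume := by
      apply IntegrableOn.congr_fun ((hGright z).integrableOn_Ioc) _ measurableSet_Ioc
      intro s hs
      simp [hHu, if_pos hs.1.le]
    show (∫ s in z..t, G s z) = ∫ s in Set.Ioc t₀ t, Hu (s, z)
    rw [show (∫ s in z..t, G s z) = ∫ s in Set.Ioc z t, G s z from
        intervalIntegral.integral_of_le hz2, hsplit,
      setIntegral_union (Set.Ioc_disjoint_Ioc_of_le le_rfl) measurableSet_Ioc intA intB]
    have e1 : ∫ s in Set.Ioc t₀ z, Hu (s, z) = 0 := integral_eq_zero_of_ae hae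
    have e2 : ∫ s in Set.Ioc z t, Hu (s, z) = ∫ s in Set.Ioc z t, G s z := by
      apply setIntegral_congr_fun measurableSet_Ioc
      intro s hs; simp [hHu, if_pos hs.1.le]
    rw [e1, e2, zero_add]
  rw [hL, hR]
  exact swap

lemma fubini_tri' {ψ h : ℝ → ℝ} {Φ : ℝ → ℝ → ℝ} (hψ : Continuous ψ)
    (hΦ : Continuous fun q : ℝ × ℝ => Φ q.1 q.2) (hh : Continuous h)
    {t₀ t : ℝ} (hle : t₀ ≤ t) :
    (∫ s in t₀..t, ψ s * ∫ z in t₀..s, Φ s z * h z)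
      = ∫ z in t₀..t, (∫ s in z..t, ψ s * Φ s z) * h z := by
  have hG : Continuous fun q : ℝ × ℝ => ψ q.1 * (Φ q.1 q.2 * h q.2) :=
    (hψ.comp continuous_fst).mul (hΦ.mul (hh.comp continuous_snd))
  have := fubini_tri (G := fun s z => ψ s * (Φ s z * h z)) hG hle
  calc (∫ s in t₀..t, ψ s * ∫ z in t₀..s, Φ s z * h z)
      = ∫ s in t₀..t, ∫ z in t₀..s, ψ s * (Φ s z * h z) := by
        apply intervalIntegral.integral_congr
        intro s _
        show ψ s * ∫ z in t₀..s, Φ s z * h z = ∫ z in t₀..s, ψ s * (Φ s z * h z)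
        rw [intervalIntegral.integral_const_mul]
    _ = ∫ z in t₀..t, ∫ s in z..t, ψ s * (Φ s z * h z) := this
    _ = ∫ z in t₀..t, (∫ s in z..t, ψ s * Φ s z) * h z := by
        apply intervalIntegral.integral_congr
        intro z _
        show (∫ s in z..t, ψ s * (Φ s z * h z)) = (∫ s in z..t, ψ s * Φ s z) * h z
        rw [← intervalIntegral.integral_mul_const]
        apply intervalIntegral.integral_congr
        intro s _
        ring

noncomputable def rclamp (t₀ T u : ℝ) : ℝ := min (max u t₀) T

lemma rclamp_continuous (t₀ T : ℝ) : Continuous (rclamp t₀ T) := by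
  unfold rclamp; fun_prop

lemma rclamp_mem {t₀ T : ℝ} (h : t₀ ≤ T) (u : ℝ) : rclamp t₀ T u ∈ Set.Icc t₀ T := by
  unfold rclamp
  constructor
  · exact le_min (le_max_right _ _) h
  · exact min_le_right _ _

lemma rclamp_eq {t₀ T u : ℝ} (h1 : t₀ ≤ u) (h2 : u ≤ T) : rclamp t₀ T u = u := by
  unfold rclamp
  rw [max_eq_left h1, min_eq_left h2]

/-- Any continuous solution of the LVIE is reconstructed from its load vector:
x(t) = F(t,λ) − Σⱼ bⱼ(t,λ) x(tⱼ) on [t₀,T]. -/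
theorem lvie_solution_reconstruction_from_loads
    (t₀ T : ℝ) (ht : t₀ < T) (m : ℕ) (hm : 2 ≤ m)
    (p : Fin (m - 1) → ℝ) (hpmono : StrictMono p)
    (hp : ∀ j, t₀ < p j ∧ p j < T)
    (f : ℝ → ℝ) (hf : ContinuousOn f (Set.Icc t₀ T))
    (a : Fin (m - 1) → ℝ → ℝ) (ha : ∀ j, ContinuousOn (a j) (Set.Icc t₀ T))
    (K : ℝ → ℝ → ℝ)
    (hK : ContinuousOn (fun q : ℝ × ℝ => K q.1 q.2)
      {q : ℝ × ℝ | t₀ ≤ q.2 ∧ q.2 ≤ q.1 ∧ q.1 ≤ T})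
    (lam : ℝ)
    (Kn : ℕ → ℝ → ℝ → ℝ)
    (hKn1 : ∀ t s, Kn 1 t s = K t s)
    (hKnrec : ∀ n, 2 ≤ n → ∀ t s, Kn n t s = ∫ z in s..t, K t z * Kn (n - 1) z s)
    (R : ℝ → ℝ → ℝ → ℝ)
    (hR : ∀ t s lam', R t s lam' = ∑' n : ℕ, lam' ^ (n + 1) * Kn (n + 1) t s)
    (F : ℝ → ℝ → ℝ)
    (hF : ∀ t lam', F t lam' = f t + ∫ s in t₀..t, R t s lam' * f s)
    (b : Fin (m - 1) → ℝ → ℝ → ℝ)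
    (hb : ∀ j t lam', b j t lam' = a j t + ∫ s in t₀..t, R t s lam' * a j s)
    (x : ℝ → ℝ) (hx : ContinuousOn x (Set.Icc t₀ T))
    (hsol : ∀ t ∈ Set.Icc t₀ T,
      x t + ∑ j, a j t * x (p j) = lam * (∫ s in t₀..t, K t s * x s) + f t) :
    ∀ t ∈ Set.Icc t₀ T, x t = F t lam - ∑ j, b j t lam * x (p j) := by
  have hT : t₀ ≤ T := ht.le
  set c : ℝ → ℝ := rclamp t₀ T with hc
  have hccont : Continuous c := rclamp_continuous t₀ T
  have hcmem : ∀ u, c u ∈ Set.Icc t₀ T := fun u => rclamp_mem hT u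
  have hceq : ∀ u ∈ Set.Icc t₀ T, c u = u := fun u hu => rclamp_eq hu.1 hu.2
  -- the extended kernel
  set Kt : ℝ → ℝ → ℝ := fun u v => K (min (max u (c v)) T) (c v) with hKt
  have hprojmem : ∀ q : ℝ × ℝ,
      (min (max q.1 (c q.2)) T, c q.2) ∈ {q : ℝ × ℝ | t₀ ≤ q.2 ∧ q.2 ≤ q.1 ∧ q.1 ≤ T} := by
    intro q
    refine ⟨(hcmem q.2).1, le_min (le_max_right _ _) (hcmem q.2).2, min_le_right _ _⟩
  have hKtcont : Continuous fun q : ℝ × ℝ => Kt q.1 q.2 := by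
    have hproj : Continuous fun q : ℝ × ℝ => (min (max q.1 (c q.2)) T, c q.2) := by fun_prop
    exact hK.comp_continuous hproj hprojmem
  have hKteq : ∀ u v, t₀ ≤ v → v ≤ u → u ≤ T → Kt u v = K u v := by
    intro u v h1 h2 h3
    simp only [hKt]
    rw [hceq v ⟨h1, h2.trans h3⟩, max_eq_left h2, min_eq_left h3]
  -- the bound
  have hΔcomp : IsCompact {q : ℝ × ℝ | t₀ ≤ q.2 ∧ q.2 ≤ q.1 ∧ q.1 ≤ T} := by
    apply (isCompact_Icc.prod isCompact_Icc : IsCompact (Set.Icc t₀ T ×ˢ Set.Icc t₀ T)).of_isClosed_subset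
    · exact (isClosed_le continuous_const continuous_snd).inter
        ((isClosed_le continuous_snd continuous_fst).inter (isClosed_le continuous_fst continuous_const))
    · rintro ⟨u, v⟩ ⟨h1, h2, h3⟩
      exact ⟨⟨(h1.trans h2), h3⟩, ⟨h1, h2.trans h3⟩⟩
  obtain ⟨M, hM⟩ := hΔcomp.exists_bound_of_continuousOn hK
  have hMb : ∀ u v, |Kt u v| ≤ M := by
    intro u v
    exact hM _ (hprojmem (u, v))
  have hM0 : (0:ℝ) ≤ M := (abs_nonneg _).trans (hMb t₀ t₀)
  -- extended solution and data
  set X : ℝ → ℝ := fun u => x (c u) with hX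
  have hXcont : Continuous X := hx.comp_continuous hccont hcmem
  have hXeq : ∀ u ∈ Set.Icc t₀ T, X u = x u := by
    intro u hu; simp only [hX]; rw [hceq u hu]
  set G : ℝ → ℝ := fun u => f (c u) - ∑ j, a j (c u) * x (p j) with hG
  have hGcont : Continuous G := by
    apply Continuous.sub (hf.comp_continuous hccont hcmem)
    apply continuous_finset_sum
    intro j _
    exact ((ha j).comp_continuous hccont hcmem).mul continuous_const
  have hGeq : ∀ u ∈ Set.Icc t₀ T, G u = f u - ∑ j, a j u * x (p j) := by
    intro u hu; simp only [hG]; rw [hceq u hu]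
  -- the integral equation in extended form
  have heq : ∀ s ∈ Set.Icc t₀ T, X s = G s + lam * ∫ z in t₀..s, Kt s z * X z := by
    intro s hs
    have h1 := hsol s hs
    have h2 : (∫ z in t₀..s, K s z * x z) = ∫ z in t₀..s, Kt s z * X z := by
      apply intervalIntegral.integral_congr
      intro z hz
      rw [Set.uIcc_of_le hs.1] at hz
      show K s z * x z = Kt s z * X z
      rw [hKteq s z hz.1 hz.2 hs.2, hXeq z ⟨hz.1, hz.2.trans hs.2⟩]
    rw [hXeq s hs, hGeq s hs, ← h2]
    linarith
  -- the iterated-kernel coefficients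
  set A : ℕ → ℝ → ℝ := fun n u => ∫ z in t₀..u, KIter Kt n u z * G z with hA
  have hAcont : ∀ n, Continuous (A n) := by
    intro n
    apply intervalIntegral.continuous_parametric_intervalIntegral_of_continuous _ continuous_id
    show Continuous fun q : ℝ × ℝ => KIter Kt n q.1 q.2 * G q.2
    exact (KIter_cont hKtcont n).mul (hGcont.comp continuous_snd)
  have claim : ∀ N : ℕ, ∀ u ∈ Set.Icc t₀ T,
      X u = G u + (∑ n ∈ Finset.range N, lam ^ (n+1) * A n u)
        + lam ^ (N+1) * ∫ s in t₀..u, KIter Kt N u s * X s := by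
    intro N
    induction N with
    | zero =>
      intro u hu
      simp only [Finset.range_zero, Finset.sum_empty, add_zero, zero_add, pow_one,
        show KIter Kt 0 = Kt from rfl]
      exact heq u hu
    | succ N ih =>
      intro u hu
      have hu1 : t₀ ≤ u := hu.1
      set W : ℝ → ℝ := fun s => ∫ z in t₀..s, KIter Kt N s z * X z with hWdef
      have hWcont : Continuous W := by
        apply intervalIntegral.continuous_parametric_intervalIntegral_of_continuous _ continuous_id
        show Continuous fun q : ℝ × ℝ => KIter Kt N q.1 q.2 * X q.2
        exact (KIter_cont hKtcont N).mul (hXcont.comp continuous_snd)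
      have hcongr : (∫ s in t₀..u, Kt u s * X s)
          = ∫ s in t₀..u, (Kt u s * G s
              + (∑ n ∈ Finset.range N, lam ^ (n+1) * (Kt u s * A n s))
              + lam ^ (N+1) * (Kt u s * W s)) := by
        apply intervalIntegral.integral_congr
        intro s hs
        rw [Set.uIcc_of_le hu1] at hs
        have hs' : s ∈ Set.Icc t₀ T := ⟨hs.1, hs.2.trans hu.2⟩
        show Kt u s * X s = _
        rw [ih s hs', mul_add, mul_add, Finset.mul_sum]
        congr 1
        · congr 1
          apply Finset.sum_congr rfl
          intro n _
          ring
        · ring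
      have hKtu : Continuous fun s => Kt u s :=
        hKtcont.comp (continuous_const.prodMk continuous_id)
      have int1 : IntervalIntegrable (fun s => Kt u s * G s) volume t₀ u :=
        (hKtu.mul hGcont).intervalIntegrable _ _
      have int2 : IntervalIntegrable
          (fun s => ∑ n ∈ Finset.range N, lam ^ (n+1) * (Kt u s * A n s)) volume t₀ u := by
        apply Continuous.intervalIntegrable
        apply continuous_finset_sum
        intro n _
        exact continuous_const.mul (hKtu.mul (hAcont n))
      have int3 : IntervalIntegrable (fun s => lam ^ (N+1) * (Kt u s * W s)) volume t₀ u :=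
        (continuous_const.mul (hKtu.mul hWcont)).intervalIntegrable _ _
      have fubA : ∀ n : ℕ, (∫ s in t₀..u, Kt u s * A n s) = A (n+1) u :=
        fun n => fubini_tri' (ψ := fun s => Kt u s) (Φ := KIter Kt n) (h := G)
          hKtu (KIter_cont hKtcont n) hGcont hu1
      have fubW : (∫ s in t₀..u, Kt u s * W s)
          = ∫ z in t₀..u, KIter Kt (N+1) u z * X z :=
        fubini_tri' (ψ := fun s => Kt u s) (Φ := KIter Kt N) (h := X)
          hKtu (KIter_cont hKtcont N) hXcont hu1
      have hmain := heq u hu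
      rw [hcongr, intervalIntegral.integral_add (int1.add int2) int3,
        intervalIntegral.integral_add int1 int2,
        intervalIntegral.integral_finset_sum (f := fun n s => lam ^ (n+1) * (Kt u s * A n s))
          (fun n _ => (continuous_const.mul (hKtu.mul (hAcont n))).intervalIntegrable _ _),
        intervalIntegral.integral_const_mul, fubW] at hmain
      simp only [intervalIntegral.integral_const_mul] at hmain
      have hsum : ∀ n ∈ Finset.range N,
          lam ^ (n+1) * (∫ s in t₀..u, Kt u s * A n s) = lam ^ (n+1) * A (n+1) u := by
        intro n _
        rw [fubA n]
      rw [Finset.sum_congr rfl hsum] at hmain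
      have hA0 : (∫ s in t₀..u, Kt u s * G s) = A 0 u := rfl
      rw [hA0] at hmain
      rw [Finset.sum_range_succ']
      set J := ∫ z in t₀..u, KIter Kt (N+1) u z * X z with hJ
      have hS : (∑ n ∈ Finset.range N, lam ^ (n+1+1) * A (n+1) u)
          = lam * ∑ n ∈ Finset.range N, lam ^ (n+1) * A (n+1) u := by
        rw [Finset.mul_sum]
        apply Finset.sum_congr rfl
        intro n _
        ring
      rw [hmain, hS]
      ring
  -- bound for x on the interval
  obtain ⟨CX, hCX⟩ := isCompact_Icc.exists_bound_of_continuousOn hx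
  have hCXb : ∀ u, |X u| ≤ CX := fun u => hCX _ (hcmem u)
  have hCX0 : (0:ℝ) ≤ CX := (abs_nonneg _).trans (hCXb t₀)
  obtain ⟨CG, hCG⟩ := isCompact_Icc.exists_bound_of_continuousOn hGcont.continuousOn
  have hCG0 : (0:ℝ) ≤ CG := (abs_nonneg _).trans (hCG t₀ (Set.left_mem_Icc.mpr hT))
  set D : ℝ := |lam| * M * (T - t₀) with hD
  have hD0 : 0 ≤ D := by
    have : (0:ℝ) ≤ T - t₀ := sub_nonneg.mpr hT
    positivity
  -- uniform summable bound
  set uB : ℕ → ℝ := fun n => (|lam| * M) * (D ^ n / n.factorial) with huB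
  have huB0 : ∀ n, 0 ≤ uB n := by
    intro n
    have : (0:ℝ) ≤ (n.factorial : ℝ) := Nat.cast_nonneg _
    positivity
  have huBsum : Summable uB := (Real.summable_pow_div_factorial D).mul_left _
  have hterm : ∀ n : ℕ, ∀ s t' : ℝ, t₀ ≤ s → s ≤ t' → t' ≤ T →
      |lam ^ (n+1) * KIter Kt n t' s| ≤ uB n := by
    intro n s t' h1 h2 h3
    have hK1 := KIter_bound hKtcont hMb n s t' h2
    have hle1 : (t' - s) ^ n ≤ (T - t₀) ^ n := by
      apply pow_le_pow_left₀ (sub_nonneg.mpr h2)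
      linarith
    calc |lam ^ (n+1) * KIter Kt n t' s| = |lam| ^ (n+1) * |KIter Kt n t' s| := by
          rw [abs_mul, abs_pow]
      _ ≤ |lam| ^ (n+1) * (M ^ (n+1) * (t' - s) ^ n / n.factorial) := by
          apply mul_le_mul_of_nonneg_left hK1 (pow_nonneg (abs_nonneg _) _)
      _ ≤ |lam| ^ (n+1) * (M ^ (n+1) * (T - t₀) ^ n / n.factorial) := by
          have hfp : (0:ℝ) < (n.factorial : ℝ) := by
            exact_mod_cast Nat.factorial_pos n
          gcongr
      _ = uB n := by
          simp only [huB, hD]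
          rw [mul_pow]
          field_simp
          ring
  -- now fix t
  intro t htm
  have ht1 : t₀ ≤ t := htm.1
  have ht2 : t ≤ T := htm.2
  set RT : ℝ → ℝ := fun s => ∑' n : ℕ, lam ^ (n+1) * KIter Kt n t s with hRT
  -- remainder tends to zero
  have hrem : Filter.Tendsto
      (fun N : ℕ => lam ^ (N+1) * ∫ s in t₀..t, KIter Kt N t s * X s)
      Filter.atTop (nhds 0) := by
    refine squeeze_zero_norm (a := fun N => uB N * CX * (T - t₀)) ?_ ?_
    · intro N
      have hbI : ‖∫ s in t₀..t, KIter Kt N t s * X s‖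
          ≤ (M ^ (N+1) * (T - t₀) ^ N / N.factorial * CX) * |t - t₀| := by
        apply intervalIntegral.norm_integral_le_of_norm_le_const
        intro s hs
        rw [Set.uIoc_of_le ht1] at hs
        have h1 : |KIter Kt N t s| ≤ M ^ (N+1) * (t - s) ^ N / N.factorial :=
          KIter_bound hKtcont hMb N s t hs.2
        have h2 : (t - s) ^ N ≤ (T - t₀) ^ N := by
          apply pow_le_pow_left₀ (sub_nonneg.mpr hs.2)
          have := hs.1
          linarith
        have hfp : (0:ℝ) < (N.factorial : ℝ) := by exact_mod_cast Nat.factorial_pos N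
        calc ‖KIter Kt N t s * X s‖ = |KIter Kt N t s| * |X s| := abs_mul _ _
          _ ≤ (M ^ (N+1) * (T - t₀) ^ N / N.factorial) * CX := by
              apply mul_le_mul _ (hCXb s) (abs_nonneg _) _
              · refine h1.trans ?_
                gcongr
              · have hTn : (0:ℝ) ≤ T - t₀ := sub_nonneg.mpr hT
                positivity
      have habs : |t - t₀| ≤ T - t₀ := by
        rw [abs_of_nonneg (sub_nonneg.mpr ht1)]; linarith
      calc ‖lam ^ (N+1) * ∫ s in t₀..t, KIter Kt N t s * X s‖
          = |lam| ^ (N+1) * ‖∫ s in t₀..t, KIter Kt N t s * X s‖ := by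
            rw [Real.norm_eq_abs, abs_mul, abs_pow]; rfl
        _ ≤ |lam| ^ (N+1) * ((M ^ (N+1) * (T - t₀) ^ N / N.factorial * CX) * |t - t₀|) := by
            apply mul_le_mul_of_nonneg_left hbI (pow_nonneg (abs_nonneg _) _)
        _ ≤ |lam| ^ (N+1) * ((M ^ (N+1) * (T - t₀) ^ N / N.factorial * CX) * (T - t₀)) := by
            have hfp : (0:ℝ) < (N.factorial : ℝ) := by exact_mod_cast Nat.factorial_pos N
            have hTn : (0:ℝ) ≤ T - t₀ := sub_nonneg.mpr hT
            gcongr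
        _ = uB N * CX * (T - t₀) := by
            simp only [huB, hD]
            rw [mul_pow]
            have hfp : ((N.factorial : ℝ)) ≠ 0 := by
              exact_mod_cast (Nat.factorial_pos N).ne'
            field_simp
            ring
    · have h1 : Filter.Tendsto (fun N : ℕ => D ^ N / (N.factorial : ℝ))
          Filter.atTop (nhds 0) := FloorSemiring.tendsto_pow_div_factorial_atTop D
      have := ((h1.const_mul (|lam| * M)).mul_const CX).mul_const (T - t₀)
      simpa using this
  -- first limit: partial sums converge to X t - G t
  have hlim1 : Filter.Tendsto (fun N : ℕ => ∑ n ∈ Finset.range N, lam ^ (n+1) * A n t)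
      Filter.atTop (nhds (X t - G t)) := by
    have hfe : (fun N : ℕ => ∑ n ∈ Finset.range N, lam ^ (n+1) * A n t)
        = fun N => (X t - G t) - lam ^ (N+1) * ∫ s in t₀..t, KIter Kt N t s * X s := by
      funext N
      have := claim N t htm
      linarith
    rw [hfe]
    have : Filter.Tendsto (fun _ : ℕ => X t - G t) Filter.atTop (nhds (X t - G t)) :=
      tendsto_const_nhds
    simpa using this.sub hrem
  -- pointwise summability
  have hsumm : ∀ s : ℝ, t₀ ≤ s → s ≤ t → Summable (fun n => lam ^ (n+1) * KIter Kt n t s) := by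
    intro s h1 h2
    apply Summable.of_norm_bounded huBsum
    intro n
    exact hterm n s t h1 h2 ht2
  -- partial sums as set integrals
  have hSN : ∀ N : ℕ, (∑ n ∈ Finset.range N, lam ^ (n+1) * A n t)
      = ∫ s in Set.Ioc t₀ t,
          (∑ n ∈ Finset.range N, lam ^ (n+1) * KIter Kt n t s) * G s := by
    intro N
    have hci : ∀ n : ℕ, IntegrableOn
        (fun s => lam ^ (n+1) * (KIter Kt n t s * G s)) (Set.Ioc t₀ t) volume := by
      intro n
      apply Continuous.integrableOn_Ioc
      exact continuous_const.mul
        (((KIter_cont hKtcont n).comp (continuous_const.prodMk continuous_id)).mul hGcont)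
    calc (∑ n ∈ Finset.range N, lam ^ (n+1) * A n t)
        = ∑ n ∈ Finset.range N, ∫ s in Set.Ioc t₀ t,
            lam ^ (n+1) * (KIter Kt n t s * G s) := by
          apply Finset.sum_congr rfl
          intro n _
          rw [MeasureTheory.integral_const_mul]
          congr 1
          simp only [hA]
          rw [intervalIntegral.integral_of_le ht1]
      _ = ∫ s in Set.Ioc t₀ t, ∑ n ∈ Finset.range N,
            lam ^ (n+1) * (KIter Kt n t s * G s) := by
          rw [MeasureTheory.integral_finset_sum _ (fun n _ => hci n)]
      _ = ∫ s in Set.Ioc t₀ t,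
            (∑ n ∈ Finset.range N, lam ^ (n+1) * KIter Kt n t s) * G s := by
          apply setIntegral_congr_fun measurableSet_Ioc
          intro s _
          show (∑ n ∈ Finset.range N, lam ^ (n+1) * (KIter Kt n t s * G s))
              = (∑ n ∈ Finset.range N, lam ^ (n+1) * KIter Kt n t s) * G s
          rw [Finset.sum_mul]
          apply Finset.sum_congr rfl
          intro n _
          ring
  -- second limit via dominated convergence
  have hlim2 : Filter.Tendsto
      (fun N : ℕ => ∫ s in Set.Ioc t₀ t,
        (∑ n ∈ Finset.range N, lam ^ (n+1) * KIter Kt n t s) * G s)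
      Filter.atTop (nhds (∫ s in Set.Ioc t₀ t, RT s * G s)) := by
    apply MeasureTheory.tendsto_integral_of_dominated_convergence
      (bound := fun _ => (∑' n, uB n) * CG)
    · intro N
      apply Continuous.aestronglyMeasurable
      apply Continuous.mul _ hGcont
      apply continuous_finset_sum
      intro n _
      exact continuous_const.mul
        ((KIter_cont hKtcont n).comp (continuous_const.prodMk continuous_id))
    · exact integrableOn_const measure_Ioc_lt_top.ne
    · intro N
      filter_upwards [ae_restrict_mem measurableSet_Ioc] with s hs
      have hs1 : t₀ ≤ s := hs.1.le
      have hs2 : s ≤ t := hs.2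
      have hb1 : |∑ n ∈ Finset.range N, lam ^ (n+1) * KIter Kt n t s| ≤ ∑' n, uB n := by
        refine (Finset.abs_sum_le_sum_abs _ _).trans ?_
        refine le_trans (Finset.sum_le_sum fun n _ => hterm n s t hs1 hs2 ht2) ?_
        exact huBsum.sum_le_tsum _ (fun n _ => huB0 n)
      have hb2 : |G s| ≤ CG := hCG s ⟨hs1, hs2.trans ht2⟩
      calc ‖(∑ n ∈ Finset.range N, lam ^ (n+1) * KIter Kt n t s) * G s‖
          = |∑ n ∈ Finset.range N, lam ^ (n+1) * KIter Kt n t s| * |G s| := abs_mul _ _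
        _ ≤ (∑' n, uB n) * CG := by
            apply mul_le_mul hb1 hb2 (abs_nonneg _)
            exact le_trans (abs_nonneg _) hb1
    · filter_upwards [ae_restrict_mem measurableSet_Ioc] with s hs
      exact ((hsumm s hs.1.le hs.2).hasSum.tendsto_sum_nat).mul_const (G s)
  -- combine the limits
  have hXt : X t = G t + ∫ s in Set.Ioc t₀ t, RT s * G s := by
    have h2 : Filter.Tendsto (fun N : ℕ => ∑ n ∈ Finset.range N, lam ^ (n+1) * A n t)
        Filter.atTop (nhds (∫ s in Set.Ioc t₀ t, RT s * G s)) := by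
      have := funext hSN
      rw [this]
      exact hlim2
    have := tendsto_nhds_unique hlim1 h2
    linarith
  -- agreement of the iterated kernels with Kn
  have hagree : ∀ n : ℕ, ∀ u s : ℝ, t₀ ≤ s → s ≤ u → u ≤ T →
      Kn (n+1) u s = KIter Kt n u s := by
    intro n
    induction n with
    | zero =>
      intro u s h1 h2 h3
      rw [hKn1]
      exact (hKteq u s h1 h2 h3).symm
    | succ n ih =>
      intro u s h1 h2 h3
      rw [hKnrec (n+2) (by omega) u s]
      show (∫ z in s..u, K u z * Kn (n+1) z s) = KIter Kt (n+1) u s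
      have hcg : (∫ z in s..u, K u z * Kn (n+1) z s)
          = ∫ z in s..u, Kt u z * KIter Kt n z s := by
        apply intervalIntegral.integral_congr
        intro z hz
        rw [Set.uIcc_of_le h2] at hz
        show K u z * Kn (n+1) z s = Kt u z * KIter Kt n z s
        rw [hKteq u z (h1.trans hz.1) hz.2 h3, ih z s h1 hz.1 (hz.2.trans h3)]
      rw [hcg]
      rfl
  have hRTeq : ∀ s ∈ Set.Icc t₀ t, RT s = R t s lam := by
    intro s hs
    rw [hR t s lam]
    apply tsum_congr
    intro n
    rw [hagree n t s hs.1 hs.2 ht2]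
  -- continuity of RT on [t₀, t]
  have hRTcont : ContinuousOn RT (Set.Icc t₀ t) := by
    have htu : TendstoUniformlyOn
        (fun N s => ∑ n ∈ Finset.range N, lam ^ (n+1) * KIter Kt n t s) RT
        Filter.atTop (Set.Icc t₀ t) := by
      apply tendstoUniformlyOn_tsum_nat huBsum
      intro n s hs
      exact hterm n s t hs.1 hs.2 ht2
    apply htu.continuousOn
    apply Filter.Frequently.of_forall
    intro N
    apply Continuous.continuousOn
    apply continuous_finset_sum
    intro n _
    exact continuous_const.mul
      ((KIter_cont hKtcont n).comp (continuous_const.prodMk continuous_id))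
  -- integrability of the pieces
  have hIccu : Set.uIcc t₀ t = Set.Icc t₀ t := Set.uIcc_of_le ht1
  have hfc : Continuous fun s => f (c s) := hf.comp_continuous hccont hcmem
  have hac : ∀ j, Continuous fun s => a j (c s) :=
    fun j => (ha j).comp_continuous hccont hcmem
  have intRf : IntervalIntegrable (fun s => RT s * f (c s)) volume t₀ t := by
    apply ContinuousOn.intervalIntegrable
    rw [hIccu]
    exact hRTcont.mul hfc.continuousOn
  have intRa : ∀ j, IntervalIntegrable (fun s => RT s * a j (c s) * x (p j)) volume t₀ t := by
    intro j
    apply ContinuousOn.intervalIntegrable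
    rw [hIccu]
    exact (hRTcont.mul (hac j).continuousOn).mul continuousOn_const
  have intRaS : IntervalIntegrable
      (fun s => ∑ j, RT s * a j (c s) * x (p j)) volume t₀ t := by
    apply ContinuousOn.intervalIntegrable
    rw [hIccu]
    apply continuousOn_finset_sum
    intro j _
    exact (hRTcont.mul (hac j).continuousOn).mul continuousOn_const
  -- split the integral of RT * G
  have hsplit : (∫ s in t₀..t, RT s * G s)
      = (∫ s in t₀..t, RT s * f (c s))
        - ∑ j, (∫ s in t₀..t, RT s * a j (c s)) * x (p j) := by
    have h1 : (∫ s in t₀..t, RT s * G s)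
        = ∫ s in t₀..t, (RT s * f (c s) - ∑ j, RT s * a j (c s) * x (p j)) := by
      apply intervalIntegral.integral_congr
      intro s _
      show RT s * G s = RT s * f (c s) - ∑ j, RT s * a j (c s) * x (p j)
      simp only [hG]
      rw [mul_sub, Finset.mul_sum]
      congr 1
      apply Finset.sum_congr rfl
      intro j _
      ring
    rw [h1, intervalIntegral.integral_sub intRf intRaS,
      intervalIntegral.integral_finset_sum (fun j _ => intRa j)]
    congr 1
    apply Finset.sum_congr rfl
    intro j _
    rw [← intervalIntegral.integral_mul_const]
  -- identify with R
  have hcongrf : (∫ s in t₀..t, RT s * f (c s)) = ∫ s in t₀..t, R t s lam * f s := by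
    apply intervalIntegral.integral_congr
    intro s hs
    rw [hIccu] at hs
    show RT s * f (c s) = R t s lam * f s
    rw [hRTeq s hs, hceq s ⟨hs.1, hs.2.trans ht2⟩]
  have hcongra : ∀ j, (∫ s in t₀..t, RT s * a j (c s)) = ∫ s in t₀..t, R t s lam * a j s := by
    intro j
    apply intervalIntegral.integral_congr
    intro s hs
    rw [hIccu] at hs
    show RT s * a j (c s) = R t s lam * a j s
    rw [hRTeq s hs, hceq s ⟨hs.1, hs.2.trans ht2⟩]
  -- final assembly
  have hxt : x t = X t := (hXeq t htm).symm
  have hIoc : (∫ s in Set.Ioc t₀ t, RT s * G s) = ∫ s in t₀..t, RT s * G s :=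
    (intervalIntegral.integral_of_le ht1).symm
  have hFt : (∫ s in t₀..t, R t s lam * f s) = F t lam - f t := by
    have := hF t lam
    linarith
  have hbj : ∀ j, (∫ s in t₀..t, R t s lam * a j s) = b j t lam - a j t := by
    intro j
    have := hb j t lam
    linarith
  have hsum3 : (∑ j, a j t * x (p j)) + ∑ j, (b j t lam - a j t) * x (p j)
      = ∑ j, b j t lam * x (p j) := by
    rw [← Finset.sum_add_distrib]
    apply Finset.sum_congr rfl
    intro j _
    ring
  have hGt : G t = f t - ∑ j, a j t * x (p j) := hGeq t htm
  have hfin : (∑ j, (∫ s in t₀..t, RT s * a j (c s)) * x (p j))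
      = ∑ j, (b j t lam - a j t) * x (p j) := by
    apply Finset.sum_congr rfl
    intro j _
    rw [hcongra j, hbj j]
  rw [hxt, hXt, hIoc, hsplit, hcongrf, hFt, hfin, hGt]
  linarith [hsum3]
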